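/- arXiv:2103.16841 — 3 statements merged into one kernel-verified Lean document; each statement's English description precedes it below -/
import Mathlib

section
/- Let x̂ = (t, x) and ŷ = (τ, y) be points of space-time ℝ × ℝ³ (times t, τ ∈ ℝ, spatial parts x, y ∈ ℝ³), let r > 0, and let B_r(ŷ) be the closed Euclidean ball of radius r around ŷ in ℝ⁴ ≅ ℝ × ℝ³. Then the maximum of φ_Ξ(x̂ − ẑ) over ẑ ∈ B_r(ŷ) exists and equals φ_Ξ(x̂ − ŷ) + r√2; that is, φ_Ξ(x̂ − ŷ) + r√2 is the greatest element of the set {φ_Ξ(x̂ − ẑ) : ẑ ∈ B_r(ŷ)}. -/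
/-- The light cone level function `φ_Ξ(t, x) = ‖x‖ − t` on space-time `ℝ × ℝ³`. -/
noncomputable def phiXi (t : ℝ) (x : EuclideanSpace ℝ (Fin 3)) : ℝ := ‖x‖ - t

lemma add_le_sqrt2_mul (a c : ℝ) : a + c ≤ Real.sqrt 2 * Real.sqrt (a ^ 2 + c ^ 2) := by
  have h1 : a + c ≤ Real.sqrt ((a + c) ^ 2) := by
    rw [Real.sqrt_sq_eq_abs]; exact le_abs_self _
  have h2 : Real.sqrt ((a + c) ^ 2) ≤ Real.sqrt (2 * (a ^ 2 + c ^ 2)) :=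
    Real.sqrt_le_sqrt (by nlinarith [sq_nonneg (a - c)])
  rw [Real.sqrt_mul (by norm_num)] at h2
  linarith

/-- The maximum of `φ_Ξ(x̂ − ẑ)` over the closed Euclidean ball of radius `r` around
`ŷ = (τ, y)` in `ℝ⁴ ≅ ℝ × ℝ³` exists and equals `φ_Ξ(x̂ − ŷ) + r√2`. -/
theorem max_phiXi_on_closedBall (t τ : ℝ) (x y : EuclideanSpace ℝ (Fin 3))
    (r : ℝ) (hr : 0 < r) :
    IsGreatest
      {v : ℝ | ∃ (s : ℝ) (z : EuclideanSpace ℝ (Fin 3)),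
        Real.sqrt ((s - τ) ^ 2 + ‖z - y‖ ^ 2) ≤ r ∧ v = phiXi (t - s) (x - z)}
      (phiXi (t - τ) (x - y) + r * Real.sqrt 2) := by
  have hs2 : (0:ℝ) < Real.sqrt 2 := Real.sqrt_pos.mpr (by norm_num)
  have hsq2 : Real.sqrt 2 ^ 2 = 2 := Real.sq_sqrt (by norm_num)
  set c : ℝ := r / Real.sqrt 2 with hc
  have hcpos : 0 < c := div_pos hr hs2
  have hc2 : c ^ 2 + c ^ 2 = r ^ 2 := by
    rw [hc, div_pow, hsq2]; ring
  have h2c : 2 * c = r * Real.sqrt 2 := by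
    rw [hc, mul_div_assoc', div_eq_iff hs2.ne', mul_assoc, ← sq, hsq2]
    ring
  constructor
  · -- membership: the value is attained
    by_cases hxy : x = y
    · subst hxy
      refine ⟨τ + c, x - c • (EuclideanSpace.single 0 1), ?_, ?_⟩
      · have hz : ‖(x - c • (EuclideanSpace.single (0 : Fin 3) (1:ℝ))) - x‖ = c := by
          rw [sub_sub_cancel_left, norm_neg, norm_smul, EuclideanSpace.norm_single]
          simp [abs_of_pos hcpos]
        rw [hz]
        simp only [add_sub_cancel_left]
        rw [hc2, Real.sqrt_sq hr.le]
      · have hx : ‖x - (x - c • (EuclideanSpace.single (0 : Fin 3) (1:ℝ)))‖ = c := by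
          rw [sub_sub_cancel, norm_smul, EuclideanSpace.norm_single]
          simp [abs_of_pos hcpos]
        simp only [phiXi, hx, sub_self, norm_zero]
        linarith
    · set u : EuclideanSpace ℝ (Fin 3) := ‖x - y‖⁻¹ • (x - y) with hu
      have hnxy : 0 < ‖x - y‖ := by
        rw [norm_pos_iff]; exact sub_ne_zero_of_ne hxy
      have hnu : ‖u‖ = 1 := by
        rw [hu, norm_smul, norm_inv, norm_norm, inv_mul_cancel₀ hnxy.ne']
      refine ⟨τ + c, y - c • u, ?_, ?_⟩
      · have hz : ‖(y - c • u) - y‖ = c := by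
          rw [sub_sub_cancel_left, norm_neg, norm_smul, hnu]
          simp [abs_of_pos hcpos]
        rw [hz]
        simp only [add_sub_cancel_left]
        rw [hc2, Real.sqrt_sq hr.le]
      · have hx : x - (y - c • u) = (1 + c / ‖x - y‖) • (x - y) := by
          rw [hu, smul_smul, add_smul, one_smul, div_eq_mul_inv]
          abel
        have hnx : ‖x - (y - c • u)‖ = ‖x - y‖ + c := by
          rw [hx, norm_smul, Real.norm_eq_abs,
            abs_of_pos (by positivity : (0:ℝ) < 1 + c / ‖x - y‖)]
          field_simp
        simp only [phiXi, hnx]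
        linarith
  · -- upper bound
    rintro v ⟨s, z, hle, rfl⟩
    have hnn : (0:ℝ) ≤ (s - τ) ^ 2 + ‖z - y‖ ^ 2 := by positivity
    have hsum : (s - τ) + ‖z - y‖ ≤ r * Real.sqrt 2 := by
      have h1 := add_le_sqrt2_mul (s - τ) ‖z - y‖
      have h2 : Real.sqrt 2 * Real.sqrt ((s - τ) ^ 2 + ‖z - y‖ ^ 2) ≤ Real.sqrt 2 * r :=
        mul_le_mul_of_nonneg_left hle hs2.le
      linarith [mul_comm (Real.sqrt 2) r]
    have htri : ‖x - z‖ ≤ ‖x - y‖ + ‖z - y‖ := by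
      calc ‖x - z‖ ≤ ‖x - y‖ + ‖y - z‖ := norm_sub_le_norm_sub_add_norm_sub x y z
        _ = ‖x - y‖ + ‖z - y‖ := by rw [norm_sub_rev y z]
    simp only [phiXi]
    linarith
end

section
/- Let x̂ = (t, x) and ŷ = (τ, y) be points of space-time ℝ × ℝ³, let r > 0, and let B_r(ŷ) be the closed Euclidean ball of radius r around ŷ in ℝ⁴ ≅ ℝ × ℝ³. Define d_r : [0, ∞) → ℝ by d_r(α) = α + √(r² − α²) if 0 ≤ α < r/√2 and d_r(α) = r√2 if α ≥ r/√2. Then the minimum of φ_Ξ(x̂ − ẑ) over ẑ ∈ B_r(ŷ) exists and equals φ_Ξ(x̂ − ŷ) − d_r(‖x − y‖); that is, φ_Ξ(x̂ − ŷ) − d_r(‖x − y‖) is the least element of the set {φ_Ξ(x̂ − ẑ) : ẑ ∈ B_r(ŷ)}. -/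
/-- The function `d_r : [0, ∞) → ℝ`, `d_r(α) = α + √(r² − α²)` for `0 ≤ α < r/√2`
and `d_r(α) = r√2` for `α ≥ r/√2`. -/
noncomputable def dRad (r α : ℝ) : ℝ :=
  if α < r / Real.sqrt 2 then α + Real.sqrt (r ^ 2 - α ^ 2) else r * Real.sqrt 2

lemma dRad_key (r α β : ℝ) (hr : 0 < r) (hα : 0 ≤ α) (hβ : 0 ≤ β)
    (hβr : β ^ 2 ≤ r ^ 2) :
    min α β + Real.sqrt (r ^ 2 - β ^ 2) ≤ dRad r α := by
  have h2 : (0:ℝ) < Real.sqrt 2 := by positivity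
  have hs2 : (Real.sqrt 2) ^ 2 = 2 := Real.sq_sqrt (by norm_num)
  set w := Real.sqrt (r ^ 2 - β ^ 2) with hw
  have hw0 : 0 ≤ w := Real.sqrt_nonneg _
  have hw2 : w ^ 2 = r ^ 2 - β ^ 2 := Real.sq_sqrt (by linarith)
  unfold dRad
  split_ifs with h
  · have hαr : 2 * α ^ 2 < r ^ 2 := by
      have h3 : α * Real.sqrt 2 < r := (lt_div_iff₀ h2).mp h
      have h4 := mul_self_lt_mul_self (by positivity : (0:ℝ) ≤ α * Real.sqrt 2) h3
      nlinarith [hs2]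
    -- goal: min α β + w ≤ α + √(r² - α²)
    set u := Real.sqrt (r ^ 2 - α ^ 2) with hu
    have hu0 : 0 ≤ u := Real.sqrt_nonneg _
    have hu2 : u ^ 2 = r ^ 2 - α ^ 2 := Real.sq_sqrt (by nlinarith)
    rcases le_total α β with hab | hab
    · have h1 : min α β = α := min_eq_left hab
      have h2' : w ≤ u := Real.sqrt_le_sqrt (by nlinarith)
      linarith
    · have h1 : min α β = β := min_eq_right hab
      have hua : α < u := by nlinarith
      have hwb : β ≤ w := by nlinarith [sq_nonneg (w - β)]
      -- (w - u)(w + u) = α² - β², w + u > α + β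
      nlinarith [mul_nonneg (sub_nonneg.mpr hab) (sub_nonneg.mpr hab), sq_nonneg (w - u), mul_nonneg hw0 hu0]
  · -- α ≥ r/√2 : min α β + w ≤ β + w ≤ r√2
    have h1 : min α β ≤ β := min_le_right _ _
    have hc0 : 0 ≤ r * Real.sqrt 2 := by positivity
    have : β + w ≤ r * Real.sqrt 2 := by
      nlinarith [sq_nonneg (w - β), sq_nonneg (β + w)]
    linarith

/-- The minimum of `φ_Ξ(x̂ − ẑ)` over the closed Euclidean ball of radius `r` around
`ŷ = (τ, y)` in `ℝ⁴ ≅ ℝ × ℝ³` exists and equals `φ_Ξ(x̂ − ŷ) − d_r(‖x − y‖)`. -/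
theorem min_phiXi_on_closedBall (t τ : ℝ) (x y : EuclideanSpace ℝ (Fin 3))
    (r : ℝ) (hr : 0 < r) :
    IsLeast
      {v : ℝ | ∃ (s : ℝ) (z : EuclideanSpace ℝ (Fin 3)),
        Real.sqrt ((s - τ) ^ 2 + ‖z - y‖ ^ 2) ≤ r ∧ v = phiXi (t - s) (x - z)}
      (phiXi (t - τ) (x - y) - dRad r ‖x - y‖) := by
  have h2 : (0:ℝ) < Real.sqrt 2 := by positivity
  have hs2 : Real.sqrt 2 * Real.sqrt 2 = 2 := Real.mul_self_sqrt (by norm_num)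
  constructor
  · set α := ‖x - y‖ with hαdef
    have hα : 0 ≤ α := norm_nonneg _
    by_cases h : α < r / Real.sqrt 2
    · -- witness: s = τ - √(r² - α²), z = x
      have hαr : α ^ 2 ≤ r ^ 2 := by
        have h3 : α * Real.sqrt 2 < r := (lt_div_iff₀ h2).mp h
        have h4 := mul_self_lt_mul_self (by positivity : (0:ℝ) ≤ α * Real.sqrt 2) h3
        nlinarith
      set u := Real.sqrt (r ^ 2 - α ^ 2) with hu
      have hu2 : u ^ 2 = r ^ 2 - α ^ 2 := Real.sq_sqrt (by linarith)
      refine ⟨τ - u, x, ?_, ?_⟩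
      · have : (τ - u - τ) ^ 2 + ‖x - y‖ ^ 2 = r ^ 2 := by
          rw [← hαdef]; ring_nf; nlinarith
        rw [this, Real.sqrt_sq hr.le]
      · simp only [phiXi, dRad, ← hαdef, if_pos h, sub_self, norm_zero]
        ring
    · -- witness: s = τ - r/√2, z = y + (r/(√2 * α)) • (x - y)
      push_neg at h
      have hα0 : 0 < α := lt_of_lt_of_le (by positivity) h
      set c : ℝ := r / (Real.sqrt 2 * α) with hc
      have hc0 : 0 ≤ c := by positivity
      have hcα : c * α = r / Real.sqrt 2 := by
        rw [hc, div_mul_eq_mul_div, mul_div_mul_right _ _ hα0.ne']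
      have hc1 : c ≤ 1 := by
        rw [hc, div_le_one (by positivity)]
        calc r = (r / Real.sqrt 2) * Real.sqrt 2 := by field_simp
          _ ≤ α * Real.sqrt 2 := by nlinarith
          _ = Real.sqrt 2 * α := by ring
      refine ⟨τ - r / Real.sqrt 2, y + c • (x - y), ?_, ?_⟩
      · have hzy : y + c • (x - y) - y = c • (x - y) := by abel
        rw [hzy, norm_smul, Real.norm_eq_abs, abs_of_nonneg hc0, ← hαdef, hcα]
        have : (τ - r / Real.sqrt 2 - τ) ^ 2 + (r / Real.sqrt 2) ^ 2 = r ^ 2 := by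
          field_simp; ring_nf; rw [Real.sq_sqrt (by norm_num : (0:ℝ) ≤ 2)]; ring
        rw [this, Real.sqrt_sq hr.le]
      · have hxz : x - (y + c • (x - y)) = (1 - c) • (x - y) := by
          rw [sub_smul, one_smul]; abel
        have hnxz : ‖x - (y + c • (x - y))‖ = α - r / Real.sqrt 2 := by
          rw [hxz, norm_smul, Real.norm_eq_abs, abs_of_nonneg (by linarith), ← hαdef]
          rw [sub_mul, one_mul, hcα]
        simp only [phiXi, dRad, ← hαdef, if_neg (not_lt.mpr h), hnxz]
        have : r * Real.sqrt 2 = 2 * (r / Real.sqrt 2) := by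
          field_simp; nlinarith
        rw [this]; ring
  · rintro v ⟨s, z, hc, rfl⟩
    set α := ‖x - y‖ with hαdef
    have hα : 0 ≤ α := norm_nonneg _
    set a := s - τ with ha
    set β := ‖z - y‖ with hβdef
    have hβ : 0 ≤ β := norm_nonneg _
    have hcon : a ^ 2 + β ^ 2 ≤ r ^ 2 := by
      have h0 : 0 ≤ a ^ 2 + β ^ 2 := by positivity
      nlinarith [Real.sq_sqrt h0, Real.sqrt_nonneg (a ^ 2 + β ^ 2)]
    have hβr : β ^ 2 ≤ r ^ 2 := by nlinarith [sq_nonneg a]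
    have hna : -a ≤ Real.sqrt (r ^ 2 - β ^ 2) := by
      calc -a ≤ |a| := neg_le_abs a
        _ = Real.sqrt (a ^ 2) := (Real.sqrt_sq_eq_abs a).symm
        _ ≤ Real.sqrt (r ^ 2 - β ^ 2) := Real.sqrt_le_sqrt (by linarith)
    have htri : α ≤ ‖x - z‖ + β := by
      simpa [hαdef, hβdef, dist_eq_norm] using dist_triangle x z y
    have hxz : 0 ≤ ‖x - z‖ := norm_nonneg _
    have hmin : α - ‖x - z‖ ≤ min α β := le_min (by linarith) (by linarith)
    have hk := dRad_key r α β hr hα hβ hβr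
    simp only [phiXi]
    linarith
end

section
/- Let r > 0 and let α be a real number with 0 ≤ α < r/√2, and define f_r : [0, r] → ℝ by f_r(β) = |α − β| − √(r² − β²). Then the minimum of f_r over [0, r] exists, is attained at β = α, and equals −√(r² − α²); that is, −√(r² − α²) is the least element of the set {f_r(β) : β ∈ [0, r]}. -/
/-- For `r > 0` and `0 ≤ α < r/√2`, the minimum of `f_r(β) = |α − β| − √(r² − β²)` over
`[0, r]` exists, is attained at `β = α`, and equals `−√(r² − α²)`. -/
theorem min_fr_of_near (r α : ℝ) (hr : 0 < r) (hα0 : 0 ≤ α) (hα : α < r / Real.sqrt 2) :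
    IsLeast {v : ℝ | ∃ β ∈ Set.Icc (0 : ℝ) r, v = |α - β| - Real.sqrt (r ^ 2 - β ^ 2)}
      (-Real.sqrt (r ^ 2 - α ^ 2)) ∧
    |α - α| - Real.sqrt (r ^ 2 - α ^ 2) = -Real.sqrt (r ^ 2 - α ^ 2) := by
  have hs2 : (1:ℝ) < Real.sqrt 2 := by
    rw [show (1:ℝ) = Real.sqrt 1 by simp]
    exact Real.sqrt_lt_sqrt (by norm_num) (by norm_num)
  have hαr : α < r := lt_of_lt_of_le hα (by
    rw [div_le_iff₀ (by linarith)]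
    nlinarith)
  have h2α : 2 * α ^ 2 < r ^ 2 := by
    have h1 : α * Real.sqrt 2 < r := by
      have := (lt_div_iff₀ (by linarith : (0:ℝ) < Real.sqrt 2)).mp hα
      linarith
    nlinarith [Real.sq_sqrt (by norm_num : (0:ℝ) ≤ 2), Real.sqrt_nonneg 2,
      mul_le_mul_of_nonneg_left h1.le hα0, sq_nonneg (α * Real.sqrt 2 - r)]
  have hα2 : r ^ 2 - α ^ 2 ≥ 0 := by nlinarith
  have ha2 : Real.sqrt (r ^ 2 - α ^ 2) ^ 2 = r ^ 2 - α ^ 2 := Real.sq_sqrt hα2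
  have han : 0 ≤ Real.sqrt (r ^ 2 - α ^ 2) := Real.sqrt_nonneg _
  have haα : α < Real.sqrt (r ^ 2 - α ^ 2) := by
    nlinarith
  refine ⟨⟨⟨α, ⟨hα0, hαr.le⟩, by simp⟩, ?_⟩, by simp⟩
  rintro v ⟨β, ⟨hβ0, hβr⟩, rfl⟩
  have hβ2 : r ^ 2 - β ^ 2 ≥ 0 := by nlinarith
  have hb2 : Real.sqrt (r ^ 2 - β ^ 2) ^ 2 = r ^ 2 - β ^ 2 := Real.sq_sqrt hβ2
  have hbn : 0 ≤ Real.sqrt (r ^ 2 - β ^ 2) := Real.sqrt_nonneg _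
  by_cases hcase : β ≤ α
  · rw [abs_of_nonneg (by linarith)]
    nlinarith [sq_nonneg (Real.sqrt (r ^ 2 - β ^ 2) - Real.sqrt (r ^ 2 - α ^ 2))]
  · push_neg at hcase
    have : Real.sqrt (r ^ 2 - β ^ 2) ≤ Real.sqrt (r ^ 2 - α ^ 2) :=
      Real.sqrt_le_sqrt (by nlinarith)
    have habs : 0 ≤ |α - β| := abs_nonneg _
    linarith
end
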